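/- Conditional convergence of momentum Frank–Wolfe with polynomially decaying gradient-surrogate error (deterministic skeleton of the Acc-SZOFW* analysis): let T ≥ 2 be an integer, take the step size η = T^{−2/3}, and suppose there are ε₀ ≥ 0 and K ≥ 0 with ‖∇f(z_t) − v_t‖ ≤ ε₀ + K (t+1)^{−1/3} for all 0 ≤ t ≤ T−1. Then (1/T) ∑_{t=1}^{T−1} G(z_t) ≤ (f(z_0) − inf_{y∈X} f(y))/T^{1/3} + 4LD²/T^{2/3} + 2Dε₀ + 3DK/T^{1/3} + D(ε₀ + K)(ln T)/T. -/

import Mathlib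

open scoped RealInnerProductSpace

/-- The Frank–Wolfe (duality) gap of `f` over `X` at `x`:
`G(x) = sup_{w ∈ X} ⟪w − x, −∇f(x)⟫`. -/
noncomputable def fwGap {d : ℕ} (f : EuclideanSpace ℝ (Fin d) → ℝ)
    (X : Set (EuclideanSpace ℝ (Fin d))) (x : EuclideanSpace ℝ (Fin d)) : ℝ :=
  sSup ((fun w => ⟪w - x, -gradient f x⟫) '' X)

section aux

lemma descent_lemma {d : ℕ} (f : EuclideanSpace ℝ (Fin d) → ℝ) (L : ℝ)
    (hdiff : Differentiable ℝ f)
    (hLip : ∀ u v, ‖gradient f u - gradient f v‖ ≤ L * ‖u - v‖)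
    (a b : EuclideanSpace ℝ (Fin d)) :
    f b ≤ f a + ⟪gradient f a, b - a⟫ + L / 2 * ‖b - a‖ ^ 2 := by
  set c : ℝ → EuclideanSpace ℝ (Fin d) := fun s => a + s • (b - a) with hc
  have hline : ∀ s : ℝ, HasDerivAt c (b - a) s := by
    intro s
    simpa [hc] using ((hasDerivAt_id s).smul_const (b - a)).const_add a
  have hφ : ∀ s : ℝ, HasDerivAt (fun s => f (c s)) ⟪gradient f (c s), b - a⟫ s := by
    intro s
    have h1 := ((hdiff (c s)).hasGradientAt).hasFDerivAt.comp_hasDerivAt s (hline s)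
    simpa [InnerProductSpace.toDual_apply_apply, Function.comp_def] using h1
  set g : ℝ → ℝ := fun s => f (c s) - s * ⟪gradient f a, b - a⟫ - s ^ 2 * (L / 2 * ‖b - a‖ ^ 2)
    with hg
  have hg' : ∀ s : ℝ, HasDerivAt g
      (⟪gradient f (c s), b - a⟫ - ⟪gradient f a, b - a⟫ - 2 * s * (L / 2 * ‖b - a‖ ^ 2)) s := by
    intro s
    have h2 : HasDerivAt (fun s : ℝ => s * ⟪gradient f a, b - a⟫) ⟪gradient f a, b - a⟫ s := by
      simpa using (hasDerivAt_id s).mul_const _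
    have h3 : HasDerivAt (fun s : ℝ => s ^ 2 * (L / 2 * ‖b - a‖ ^ 2))
        (2 * s * (L / 2 * ‖b - a‖ ^ 2)) s := by
      simpa using (hasDerivAt_pow 2 s).mul_const (L / 2 * ‖b - a‖ ^ 2)
    exact ((hφ s).sub h2).sub h3
  have hmono : AntitoneOn g (Set.Icc (0:ℝ) 1) := by
    apply antitoneOn_of_deriv_nonpos (convex_Icc 0 1)
    · exact fun s hs => ((hg' s).continuousAt.continuousWithinAt)
    · intro s hs
      exact (hg' s).differentiableAt.differentiableWithinAt
    · intro s hs
      rw [interior_Icc] at hs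
      rw [(hg' s).deriv]
      have hcs : ⟪gradient f (c s) - gradient f a, b - a⟫ ≤ L * s * ‖b - a‖ ^ 2 := by
        calc ⟪gradient f (c s) - gradient f a, b - a⟫
            ≤ ‖gradient f (c s) - gradient f a‖ * ‖b - a‖ := real_inner_le_norm _ _
          _ ≤ (L * ‖c s - a‖) * ‖b - a‖ := by
              gcongr; exact hLip _ _
          _ = L * s * ‖b - a‖ ^ 2 := by
              have : ‖c s - a‖ = |s| * ‖b - a‖ := by
                simp [hc, norm_smul, Real.norm_eq_abs]
              rw [this, abs_of_pos hs.1]; ring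
      have := inner_sub_left (𝕜 := ℝ) (gradient f (c s)) (gradient f a) (b - a)
      nlinarith [hs.1.le, sq_nonneg ‖b - a‖]
  have h01 := hmono (Set.left_mem_Icc.2 zero_le_one) (Set.right_mem_Icc.2 zero_le_one) zero_le_one
  have hc0 : c 0 = a := by simp [hc]
  have hc1 : c 1 = b := by simp [hc]
  simp only [hg, hc0, hc1] at h01
  nlinarith [h01]


lemma sum_rpow_bound (n : ℕ) :
    ∑ t ∈ Finset.range n, ((t : ℝ) + 1) ^ (-(1/3 : ℝ)) ≤ (3/2) * (n : ℝ) ^ ((2:ℝ)/3) := by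
  have key : ∀ t : ℕ, ((t : ℝ) + 1) ^ (-(1/3 : ℝ))
      ≤ (3/2) * (((t : ℝ) + 1) ^ ((2:ℝ)/3) - (t : ℝ) ^ ((2:ℝ)/3)) := by
    intro t
    set a : ℝ := (t : ℝ) with ha
    have ha0 : 0 ≤ a := Nat.cast_nonneg t
    have ha1 : (0:ℝ) < a + 1 := by positivity
    have hgm : a ^ ((1:ℝ)/3) * a ^ ((1:ℝ)/3) * (a+1) ^ ((1:ℝ)/3)
        ≤ (1/3) * a + (1/3) * a + (1/3) * (a+1) := by
      have := Real.geom_mean_le_arith_mean3_weighted (w₁ := 1/3) (w₂ := 1/3) (w₃ := 1/3)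
        (p₁ := a) (p₂ := a) (p₃ := a+1) (by norm_num) (by norm_num) (by norm_num)
        ha0 ha0 ha1.le (by norm_num)
      linarith [this]
    have h23 : a ^ ((2:ℝ)/3) * (a+1) ^ ((1:ℝ)/3) ≤ a + 1/3 := by
      rcases eq_or_lt_of_le ha0 with h | h
      · rw [← h]
        rw [Real.zero_rpow (by norm_num)]
        norm_num
      · have : a ^ ((1:ℝ)/3) * a ^ ((1:ℝ)/3) = a ^ ((2:ℝ)/3) := by
          rw [← Real.rpow_add h]; norm_num
        rw [this] at hgm
        linarith
    -- multiply target by (a+1)^{1/3}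
    have hpos : (0:ℝ) < (a+1) ^ ((1:ℝ)/3) := Real.rpow_pos_of_pos ha1 _
    rw [← mul_le_mul_iff_of_pos_right hpos]
    have e1 : (a+1) ^ (-(1/3:ℝ)) * (a+1) ^ ((1:ℝ)/3) = 1 := by
      rw [← Real.rpow_add ha1]; norm_num
    have e2 : (a+1) ^ ((2:ℝ)/3) * (a+1) ^ ((1:ℝ)/3) = a + 1 := by
      rw [← Real.rpow_add ha1]; norm_num
    rw [e1]
    calc (1:ℝ) = (3/2) * ((a+1) - (a + 1/3)) := by ring
      _ ≤ (3/2) * ((a+1) - a ^ ((2:ℝ)/3) * (a+1) ^ ((1:ℝ)/3)) := by linarith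
      _ = (3/2) * ((a+1) ^ ((2:ℝ)/3) - a ^ ((2:ℝ)/3)) * (a+1) ^ ((1:ℝ)/3) := by
          linear_combination (-3/2 : ℝ) * e2
  calc ∑ t ∈ Finset.range n, ((t : ℝ) + 1) ^ (-(1/3 : ℝ))
      ≤ ∑ t ∈ Finset.range n, (3/2) * (((t : ℝ) + 1) ^ ((2:ℝ)/3) - (t : ℝ) ^ ((2:ℝ)/3)) :=
        Finset.sum_le_sum fun t _ => key t
    _ = (3/2) * ∑ t ∈ Finset.range n, ((((t:ℕ)+1 : ℕ) : ℝ) ^ ((2:ℝ)/3) - ((t:ℕ) : ℝ) ^ ((2:ℝ)/3)) := by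
        rw [Finset.mul_sum]; congr 1; ext t; push_cast; ring
    _ = (3/2) * ((n : ℝ) ^ ((2:ℝ)/3) - ((0:ℕ) : ℝ) ^ ((2:ℝ)/3)) := by
        rw [Finset.sum_range_sub (fun k => ((k:ℕ) : ℝ) ^ ((2:ℝ)/3))]
    _ = (3/2) * (n : ℝ) ^ ((2:ℝ)/3) := by
        norm_num [Real.zero_rpow]

noncomputable def SSum (n : ℕ) : ℝ := ∑ s ∈ Finset.range n, 1 / ((s : ℝ) + 2)

lemma SSum_nonneg (n : ℕ) : 0 ≤ SSum n := by
  apply Finset.sum_nonneg; intro s _; positivity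

lemma SSum_succ (n : ℕ) : SSum (n+1) = SSum n + 1 / ((n:ℝ) + 2) :=
  Finset.sum_range_succ _ n

lemma SSum_le (n : ℕ) : SSum n ≤ (n : ℝ) / 2 := by
  calc SSum n ≤ ∑ s ∈ Finset.range n, (1/2 : ℝ) := by
        apply Finset.sum_le_sum; intro s _
        rw [div_le_div_iff₀ (by positivity) (by norm_num)]
        have : (0:ℝ) ≤ (s:ℝ) := Nat.cast_nonneg s
        linarith
    _ = (n : ℝ) / 2 := by simp; ring

lemma Fsum_eq (n : ℕ) :
    ∑ t ∈ Finset.range n, SSum (t+1) / (((t:ℝ)+1)*((t:ℝ)+2))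
      = 1 - (1 + SSum n) / ((n:ℝ)+1) := by
  induction n with
  | zero => simp [SSum]
  | succ n ih =>
    rw [Finset.sum_range_succ, ih, SSum_succ]
    have h1 : ((n:ℝ)+1) ≠ 0 := by positivity
    have h2 : ((n:ℝ)+2) ≠ 0 := by positivity
    push_cast
    field_simp
    ring

end aux

set_option maxHeartbeats 2000000 in
/-- Conditional convergence of momentum Frank–Wolfe with polynomially decaying
gradient-surrogate error (deterministic skeleton of the Acc-SZOFW* analysis). -/
theorem momentum_fw_convergence_decaying_error
    (d : ℕ) (hd : 1 ≤ d)
    (X : Set (EuclideanSpace ℝ (Fin d))) (hXne : X.Nonempty)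
    (hXcomp : IsCompact X) (hXconv : Convex ℝ X)
    (D : ℝ) (hD : 0 < D)
    (hdiam : ∀ u ∈ X, ∀ v ∈ X, ‖u - v‖ ≤ D)
    (f : EuclideanSpace ℝ (Fin d) → ℝ)
    (L : ℝ) (hL : 0 < L)
    (hdiff : Differentiable ℝ f)
    (hLip : ∀ u v', ‖gradient f u - gradient f v'‖ ≤ L * ‖u - v'‖)
    (T : ℕ) (hT : 2 ≤ T)
    (η : ℝ) (hηdef : η = (T : ℝ) ^ (-(2 / 3 : ℝ)))
    (x y z w v : ℕ → EuclideanSpace ℝ (Fin d))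
    (hx0 : x 0 = z 0) (hy0 : y 0 = z 0) (hz0 : z 0 ∈ X)
    (hwX : ∀ t, w t ∈ X)
    (hwopt : ∀ t, ∀ w' ∈ X, ⟪w', -(v t)⟫ ≤ ⟪w t, -(v t)⟫)
    (hxrec : ∀ t : ℕ, x (t + 1)
      = x t + ((1 + 1 / (((t : ℝ) + 1) * ((t : ℝ) + 2))) * η) • (w t - x t))
    (hyrec : ∀ t : ℕ, y (t + 1) = z t + η • (w t - z t))
    (hzrec : ∀ t : ℕ, z (t + 1)
      = (1 - 1 / ((t : ℝ) + 2)) • y (t + 1) + (1 / ((t : ℝ) + 2)) • x (t + 1))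
    (ε₀ K : ℝ) (hε₀ : 0 ≤ ε₀) (hK : 0 ≤ K)
    (herr : ∀ t : ℕ, t < T →
      ‖gradient f (z t) - v t‖ ≤ ε₀ + K * ((t : ℝ) + 1) ^ (-(1 / 3 : ℝ))) :
    (1 / (T : ℝ)) * ∑ t ∈ Finset.Ico 1 T, fwGap f X (z t)
      ≤ (f (z 0) - sInf (f '' X)) / (T : ℝ) ^ ((1 : ℝ) / 3)
        + 4 * L * D ^ 2 / (T : ℝ) ^ ((2 : ℝ) / 3)
        + 2 * D * ε₀ + 3 * D * K / (T : ℝ) ^ ((1 : ℝ) / 3)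
        + D * (ε₀ + K) * Real.log T / T := by
  have hτ0 : (0:ℝ) < (T:ℝ) := by positivity
  have hτ2 : (2:ℝ) ≤ (T:ℝ) := by exact_mod_cast hT
  set P : ℝ := (T:ℝ) ^ ((1:ℝ)/3) with hPdef
  set Q : ℝ := (T:ℝ) ^ ((2:ℝ)/3) with hQdef
  have hP0 : 0 < P := Real.rpow_pos_of_pos hτ0 _
  have hQ0 : 0 < Q := Real.rpow_pos_of_pos hτ0 _
  have hP1 : 1 ≤ P := by
    have h := Real.rpow_le_rpow (by norm_num : (0:ℝ) ≤ 1) (by linarith : (1:ℝ) ≤ (T:ℝ))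
      (by norm_num : (0:ℝ) ≤ (1:ℝ)/3)
    rw [Real.one_rpow] at h
    exact h
  have hQ32 : (3/2 : ℝ) ≤ Q := by
    have h1 : ((27/8:ℝ)) ^ ((1:ℝ)/3) ≤ ((4:ℝ)) ^ ((1:ℝ)/3) :=
      Real.rpow_le_rpow (by norm_num) (by norm_num) (by norm_num)
    have h2 : ((27/8:ℝ)) ^ ((1:ℝ)/3) = 3/2 := by
      rw [show (27/8:ℝ) = (3/2)^(3:ℕ) by norm_num, ← Real.rpow_natCast ((3/2:ℝ)) 3,
        ← Real.rpow_mul (by norm_num)]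
      norm_num
    have h3 : ((4:ℝ)) ^ ((1:ℝ)/3) = (2:ℝ) ^ ((2:ℝ)/3) := by
      rw [show (4:ℝ) = (2:ℝ)^(2:ℕ) by norm_num, ← Real.rpow_natCast ((2:ℝ)) 2,
        ← Real.rpow_mul (by norm_num)]
      norm_num
    have h4 : (2:ℝ) ^ ((2:ℝ)/3) ≤ Q :=
      Real.rpow_le_rpow (by norm_num) hτ2 (by norm_num)
    rw [h2, h3] at h1
    linarith
  have hηQ : η * Q = 1 := by
    rw [hηdef, hQdef, ← Real.rpow_add hτ0]
    norm_num
  have hη0 : 0 < η := by rw [hηdef]; positivity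
  have hη23 : η ≤ 2/3 := by
    have : η = Q⁻¹ := by
      field_simp at hηQ ⊢
      linarith [hηQ]
    rw [this]
    rw [show (2/3 : ℝ) = (3/2 : ℝ)⁻¹ by norm_num]
    exact inv_anti₀ (by norm_num) hQ32
  have hPQ : P * Q = (T:ℝ) := by
    rw [hPdef, hQdef, ← Real.rpow_add hτ0]
    norm_num
  have hητ : η * (T:ℝ) = P := by
    rw [← hPQ, ← mul_assoc, mul_comm η P, mul_assoc, hηQ, mul_one]
  -- memberships
  have hmem : ∀ t, x t ∈ X ∧ y t ∈ X ∧ z t ∈ X := by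
    intro t
    induction t with
    | zero => exact ⟨hx0 ▸ hz0, hy0 ▸ hz0, hz0⟩
    | succ t ih =>
      obtain ⟨hxt, hyt, hzt⟩ := ih
      have ht1 : (0:ℝ) < (t:ℝ) + 1 := by positivity
      have ht2 : (0:ℝ) < (t:ℝ) + 2 := by positivity
      have hθ : 1 / (((t : ℝ) + 1) * ((t : ℝ) + 2)) ≤ 1/2 := by
        rw [div_le_div_iff₀ (by positivity) (by norm_num)]
        nlinarith [Nat.cast_nonneg (α := ℝ) t]
      have hγ0 : 0 ≤ (1 + 1 / (((t : ℝ) + 1) * ((t : ℝ) + 2))) * η := by positivity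
      have hγ1 : (1 + 1 / (((t : ℝ) + 1) * ((t : ℝ) + 2))) * η ≤ 1 := by
        calc (1 + 1 / (((t : ℝ) + 1) * ((t : ℝ) + 2))) * η ≤ (3/2) * (2/3) := by
              apply mul_le_mul (by linarith) hη23 hη0.le (by norm_num)
          _ = 1 := by norm_num
      have hx' : x (t+1) ∈ X := by
        have : x (t+1) = (1 - (1 + 1 / (((t : ℝ) + 1) * ((t : ℝ) + 2))) * η) • x t
            + ((1 + 1 / (((t : ℝ) + 1) * ((t : ℝ) + 2))) * η) • w t := by
          rw [hxrec t]; module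
        rw [this]
        exact hXconv hxt (hwX t) (by linarith) hγ0 (by ring)
      have hy' : y (t+1) ∈ X := by
        have : y (t+1) = (1 - η) • z t + η • w t := by rw [hyrec t]; module
        rw [this]
        exact hXconv hzt (hwX t) (by linarith) hη0.le (by ring)
      have hz' : z (t+1) ∈ X := by
        rw [hzrec t]
        have h2 : (0:ℝ) ≤ 1 / ((t:ℝ)+2) := by positivity
        have h3 : 1 / ((t:ℝ)+2) ≤ 1 := by
          rw [div_le_one ht2]; linarith
        exact hXconv hy' hx' (by linarith) h2 (by ring)
      exact ⟨hx', hy', hz'⟩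
  -- z as convex combination of y and x
  have hzcomb : ∀ t : ℕ, z t = (1 - 1/((t:ℝ)+1)) • y t + (1/((t:ℝ)+1)) • x t := by
    intro t
    cases t with
    | zero => simp [hx0.symm]
    | succ s =>
      have := hzrec s
      push_cast
      rw [show ((s:ℝ) + 1 + 1) = (s:ℝ) + 2 by ring]
      exact this
  -- Δ recursion
  have hΔrec : ∀ t : ℕ, x (t+1) - y (t+1)
      = ((1-η)*(t:ℝ)/((t:ℝ)+1)) • (x t - y t)
        + (η/(((t:ℝ)+1)*((t:ℝ)+2))) • (w t - x t) := by
    intro t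
    have ht1 : ((t:ℝ) + 1) ≠ 0 := by positivity
    have ht2 : ((t:ℝ) + 2) ≠ 0 := by positivity
    rw [hxrec t, hyrec t, hzcomb t]
    match_scalars
    · field_simp
      ring
    · field_simp
      ring
    · field_simp
      ring
  -- norm bound on Δ
  have hΔnorm : ∀ t : ℕ, (t:ℝ) * ‖x t - y t‖ ≤ η * D * SSum t := by
    intro t
    induction t with
    | zero => simp [SSum]
    | succ t ih =>
      have ht1 : (0:ℝ) < (t:ℝ) + 1 := by positivity
      have ht2 : (0:ℝ) < (t:ℝ) + 2 := by positivity
      have hwx : ‖w t - x t‖ ≤ D := hdiam _ (hwX t) _ (hmem t).1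
      have hnorm : ‖x (t+1) - y (t+1)‖
          ≤ ((1-η)*(t:ℝ)/((t:ℝ)+1)) * ‖x t - y t‖ + (η/(((t:ℝ)+1)*((t:ℝ)+2))) * D := by
        have hρnn : (0:ℝ) ≤ (1-η)*(t:ℝ)/((t:ℝ)+1) := by
          have h1η' : (0:ℝ) ≤ 1-η := by linarith
          positivity
        rw [hΔrec t]
        refine le_trans (norm_add_le _ _) ?_
        rw [norm_smul, norm_smul, Real.norm_eq_abs, Real.norm_eq_abs,
          abs_of_nonneg hρnn,
          abs_of_nonneg (by positivity : (0:ℝ) ≤ η/(((t:ℝ)+1)*((t:ℝ)+2)))]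
        gcongr
      have key : ((t:ℝ)+1) * ‖x (t+1) - y (t+1)‖
          ≤ (1-η)*(t:ℝ) * ‖x t - y t‖ + η * D / ((t:ℝ)+2) := by
        calc ((t:ℝ)+1) * ‖x (t+1) - y (t+1)‖
            ≤ ((t:ℝ)+1) * (((1-η)*(t:ℝ)/((t:ℝ)+1)) * ‖x t - y t‖
              + (η/(((t:ℝ)+1)*((t:ℝ)+2))) * D) := by
              apply mul_le_mul_of_nonneg_left hnorm (by positivity)
          _ = (1-η)*(t:ℝ) * ‖x t - y t‖ + η * D / ((t:ℝ)+2) := by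
              field_simp
      have h1η : (1-η)*(t:ℝ) * ‖x t - y t‖ ≤ (t:ℝ) * ‖x t - y t‖ := by
        nlinarith [mul_nonneg (mul_nonneg hη0.le (Nat.cast_nonneg (α := ℝ) t))
          (norm_nonneg (x t - y t))]
      push_cast
      rw [SSum_succ]
      push_cast at key
      calc ((t:ℝ)+1) * ‖x (t+1) - y (t+1)‖
          ≤ (1-η)*(t:ℝ) * ‖x t - y t‖ + η * D / ((t:ℝ)+2) := key
        _ ≤ (t:ℝ) * ‖x t - y t‖ + η * D / ((t:ℝ)+2) := by linarith
        _ ≤ η * D * SSum t + η * D / ((t:ℝ)+2) := by linarith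
        _ = η * D * (SSum t + 1/((t:ℝ)+2)) := by ring
  -- invariant: uniform inner product bound on Δ
  have hinv : ∀ t : ℕ, ∀ g : EuclideanSpace ℝ (Fin d), ∀ M : ℝ, 0 ≤ M →
      (∀ s, s ≤ t → ⟪g, w s - x s⟫ ≤ M) →
      ⟪g, x (t+1) - y (t+1)⟫ ≤ η * M * SSum (t+1) / ((t:ℝ)+1) := by
    intro t
    induction t with
    | zero =>
      intro g M hM hs
      have e : x 1 - y 1 = (η/2 : ℝ) • (w 0 - x 0) := by
        have h := hΔrec 0
        norm_num at h
        exact h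
      have hSS1 : SSum 1 = 1/2 := by simp [SSum]
      rw [e, real_inner_smul_right, hSS1]
      simp only [Nat.cast_zero]
      have h2 := mul_le_mul_of_nonneg_left (hs 0 le_rfl) hη0.le
      rw [show ((0:ℝ) + 1) = 1 by norm_num]
      rw [div_one]
      nlinarith [h2]
    | succ t ih =>
      intro g M hM hs
      have ht1 : (0:ℝ) < (t:ℝ) + 1 := by positivity
      have ht2 : (0:ℝ) < (t:ℝ) + 2 := by positivity
      have ht3 : (0:ℝ) < (t:ℝ) + 3 := by positivity
      have hih := ih g M hM (fun s hst => hs s (le_trans hst (Nat.le_succ t)))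
      have hrec := hΔrec (t+1)
      push_cast at hrec
      rw [hrec, inner_add_right, real_inner_smul_right, real_inner_smul_right]
      have hρ0 : (0:ℝ) ≤ (1-η)*((t:ℝ)+1)/((t:ℝ)+1+1) := by
        have : (0:ℝ) ≤ 1 - η := by linarith
        positivity
      have hρ1 : (1-η)*((t:ℝ)+1)/((t:ℝ)+1+1) ≤ ((t:ℝ)+1)/((t:ℝ)+2) := by
        rw [show (t:ℝ)+1+1 = (t:ℝ)+2 by ring]
        gcongr
        nlinarith [hη0.le]
      have hB0 : (0:ℝ) ≤ η * M * SSum (t+1) / ((t:ℝ)+1) := by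
        have := SSum_nonneg (t+1)
        positivity
      have h1 : ((1-η)*((t:ℝ)+1)/((t:ℝ)+1+1)) * ⟪g, x (t+1) - y (t+1)⟫
          ≤ (((t:ℝ)+1)/((t:ℝ)+2)) * (η * M * SSum (t+1) / ((t:ℝ)+1)) := by
        calc ((1-η)*((t:ℝ)+1)/((t:ℝ)+1+1)) * ⟪g, x (t+1) - y (t+1)⟫
            ≤ ((1-η)*((t:ℝ)+1)/((t:ℝ)+1+1)) * (η * M * SSum (t+1) / ((t:ℝ)+1)) :=
              mul_le_mul_of_nonneg_left hih hρ0
          _ ≤ (((t:ℝ)+1)/((t:ℝ)+2)) * (η * M * SSum (t+1) / ((t:ℝ)+1)) :=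
              mul_le_mul_of_nonneg_right hρ1 hB0
      have h2 : (η/((((t:ℝ)+1)+1)*(((t:ℝ)+1)+2))) * ⟪g, w (t+1) - x (t+1)⟫
          ≤ (η/((((t:ℝ)+1)+1)*(((t:ℝ)+1)+2))) * M :=
        mul_le_mul_of_nonneg_left (hs (t+1) le_rfl) (by positivity)
      have heq : (((t:ℝ)+1)/((t:ℝ)+2)) * (η * M * SSum (t+1) / ((t:ℝ)+1))
          + (η/((((t:ℝ)+1)+1)*(((t:ℝ)+1)+2))) * M
          = η * M * SSum (t+2) / (((t:ℝ)+1)+1) := by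
        rw [SSum_succ (t+1)]
        push_cast
        field_simp
        ring
      push_cast at heq ⊢
      push_cast at h1 h2
      linarith [h1, h2]
  -- gap nonnegativity
  have hcont : ∀ (p c : EuclideanSpace ℝ (Fin d)),
      Continuous fun u : EuclideanSpace ℝ (Fin d) => (⟪u - p, c⟫ : ℝ) := fun p c =>
    Continuous.inner (continuous_id.sub continuous_const) continuous_const
  have hgap0 : ∀ t, 0 ≤ fwGap f X (z t) := by
    intro t
    have hb : BddAbove ((fun w' => ⟪w' - z t, -gradient f (z t)⟫) '' X) :=
      (hXcomp.image (hcont _ _)).bddAbove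
    exact le_csSup hb ⟨z t, (hmem t).2.2, by simp⟩
  -- errors
  have herr1 : ∀ s, s < T → ‖gradient f (z s) - v s‖ ≤ ε₀ + K := by
    intro s hsT
    refine le_trans (herr s hsT) ?_
    have h1 : ((s:ℝ)+1) ^ (-(1/3:ℝ)) ≤ 1 :=
      Real.rpow_le_one_of_one_le_of_nonpos
        (by linarith [Nat.cast_nonneg (α := ℝ) s]) (by norm_num)
    nlinarith [mul_le_mul_of_nonneg_left h1 hK]
  have hvwx : ∀ s, ⟪v s, w s - x s⟫ ≤ 0 := by
    intro s
    have h := hwopt s (x s) (hmem s).1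
    have e : ⟪v s, w s - x s⟫ = ⟪x s, -(v s)⟫ - ⟪w s, -(v s)⟫ := by
      rw [inner_sub_right, inner_neg_right, inner_neg_right,
        real_inner_comm (x s), real_inner_comm (w s)]
      ring
    rw [e]; linarith
  have hMbound : ∀ t, t < T → ∀ s, s ≤ t →
      ⟪gradient f (z t), w s - x s⟫ ≤ D * (L*D + ε₀ + K) := by
    intro t htT s hst
    have hsT : s < T := lt_of_le_of_lt hst htT
    have hwxD : ‖w s - x s‖ ≤ D := hdiam _ (hwX s) _ (hmem s).1
    have e : ⟪gradient f (z t), w s - x s⟫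
        = ⟪gradient f (z t) - v s, w s - x s⟫ + ⟪v s, w s - x s⟫ := by
      rw [inner_sub_left]; ring
    rw [e]
    have h1 : ⟪gradient f (z t) - v s, w s - x s⟫
        ≤ ‖gradient f (z t) - v s‖ * ‖w s - x s‖ := real_inner_le_norm _ _
    have h2 : ‖gradient f (z t) - v s‖ ≤ L*D + (ε₀ + K) := by
      calc ‖gradient f (z t) - v s‖
          ≤ ‖gradient f (z t) - gradient f (z s)‖ + ‖gradient f (z s) - v s‖ :=
            norm_sub_le_norm_sub_add_norm_sub _ _ _
        _ ≤ L*D + (ε₀ + K) := by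
            have ha := hLip (z t) (z s)
            have hb := hdiam _ (hmem t).2.2 _ (hmem s).2.2
            have hc := herr1 s hsT
            nlinarith [norm_nonneg (z t - z s)]
    have h3 : ‖gradient f (z t) - v s‖ * ‖w s - x s‖ ≤ (L*D + (ε₀ + K)) * D :=
      mul_le_mul h2 hwxD (norm_nonneg _) (by positivity)
    have h4 := hvwx s
    nlinarith [h1, h3, h4]
  -- gap upper bound
  have hgapub : ∀ t, t < T → fwGap f X (z t)
      ≤ ⟪z t - w t, gradient f (z t)⟫ + 2*D*(ε₀ + K*((t:ℝ)+1)^(-(1/3:ℝ))) := by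
    intro t htT
    have hεt : ‖gradient f (z t) - v t‖ ≤ ε₀ + K*((t:ℝ)+1)^(-(1/3:ℝ)) := herr t htT
    have hεt0 : (0:ℝ) ≤ ε₀ + K*((t:ℝ)+1)^(-(1/3:ℝ)) :=
      le_trans (norm_nonneg _) hεt
    unfold fwGap
    apply csSup_le (hXne.image _)
    rintro b ⟨w', hw', rfl⟩
    simp only
    have h1 : ⟪w' - z t, -gradient f (z t)⟫
        = ⟪w' - z t, -(v t)⟫ + ⟪w' - z t, v t - gradient f (z t)⟫ := by
      rw [← inner_add_right]
      congr 1
      module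
    have h2 : ⟪w' - z t, -(v t)⟫ ≤ ⟪w t - z t, -(v t)⟫ := by
      have := hwopt t w' hw'
      rw [inner_sub_left, inner_sub_left]
      linarith
    have h3 : ⟪w' - z t, v t - gradient f (z t)⟫ ≤ D*(ε₀ + K*((t:ℝ)+1)^(-(1/3:ℝ))) := by
      refine le_trans (real_inner_le_norm _ _) ?_
      have ha : ‖w' - z t‖ ≤ D := hdiam _ hw' _ (hmem t).2.2
      have hb : ‖v t - gradient f (z t)‖ = ‖gradient f (z t) - v t‖ := norm_sub_rev _ _
      rw [hb]
      exact mul_le_mul ha hεt (norm_nonneg _) hD.le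
    have h4 : ⟪w t - z t, -(v t)⟫
        = ⟪w t - z t, -gradient f (z t)⟫ + ⟪w t - z t, gradient f (z t) - v t⟫ := by
      rw [← inner_add_right]
      congr 1
      module
    have h5 : ⟪w t - z t, gradient f (z t) - v t⟫ ≤ D*(ε₀ + K*((t:ℝ)+1)^(-(1/3:ℝ))) := by
      refine le_trans (real_inner_le_norm _ _) ?_
      have ha : ‖w t - z t‖ ≤ D := hdiam _ (hwX t) _ (hmem t).2.2
      exact mul_le_mul ha hεt (norm_nonneg _) hD.le
    have h6 : ⟪w t - z t, -gradient f (z t)⟫ = ⟪z t - w t, gradient f (z t)⟫ := by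
      rw [inner_neg_right, ← inner_neg_left, neg_sub]
    linarith
  -- z step and distance
  have hzstep : ∀ t : ℕ, z (t+1) - z t
      = η • (w t - z t) + (1/((t:ℝ)+2)) • (x (t+1) - y (t+1)) := by
    intro t
    rw [hzrec t, hyrec t]
    module
  have hzdist : ∀ t : ℕ, ‖z (t+1) - z t‖ ≤ (5/4)*η*D := by
    intro t
    have ht1 : (0:ℝ) < (t:ℝ)+1 := by positivity
    have hΔ : ‖x (t+1) - y (t+1)‖ ≤ η*D/2 := by
      have h := hΔnorm (t+1)
      have hSS : SSum (t+1) ≤ ((t:ℝ)+1)/2 := by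
        have := SSum_le (t+1); push_cast at this; exact this
      push_cast at h
      nlinarith [mul_le_mul_of_nonneg_left hSS (by positivity : (0:ℝ) ≤ η*D),
        norm_nonneg (x (t+1) - y (t+1))]
    rw [hzstep t]
    refine le_trans (norm_add_le _ _) ?_
    rw [norm_smul, norm_smul, Real.norm_eq_abs, Real.norm_eq_abs,
      abs_of_nonneg hη0.le, abs_of_nonneg (by positivity : (0:ℝ) ≤ 1/((t:ℝ)+2))]
    have h1 : ‖w t - z t‖ ≤ D := hdiam _ (hwX t) _ (hmem t).2.2
    have h2 : 1/((t:ℝ)+2) ≤ 1/2 := by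
      rw [div_le_div_iff₀ (by positivity) (by norm_num)]
      nlinarith [Nat.cast_nonneg (α := ℝ) t]
    have h3 : η * ‖w t - z t‖ ≤ η * D := mul_le_mul_of_nonneg_left h1 hη0.le
    have h4 : 1/((t:ℝ)+2) * ‖x (t+1) - y (t+1)‖ ≤ (1/2) * (η*D/2) :=
      mul_le_mul h2 hΔ (norm_nonneg _) (by norm_num)
    nlinarith [h3, h4]
  -- descent step
  have hstep : ∀ t, t < T → η * fwGap f X (z t) ≤ (f (z t) - f (z (t+1)))
      + (2*D*η) * (ε₀ + K*((t:ℝ)+1)^(-(1/3:ℝ)))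
      + (η*(D*(L*D+ε₀+K))) * (SSum (t+1)/(((t:ℝ)+1)*((t:ℝ)+2)))
      + (25/32)*L*η^2*D^2 := by
    intro t htT
    have ht1 : (0:ℝ) < (t:ℝ)+1 := by positivity
    have ht2 : (0:ℝ) < (t:ℝ)+2 := by positivity
    have hdesc := descent_lemma f L hdiff hLip (z t) (z (t+1))
    have hip : ⟪gradient f (z t), z (t+1) - z t⟫
        = η * ⟪gradient f (z t), w t - z t⟫
          + (1/((t:ℝ)+2)) * ⟪gradient f (z t), x (t+1) - y (t+1)⟫ := by
      rw [hzstep t, inner_add_right, real_inner_smul_right, real_inner_smul_right]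
    have hB := hinv t (gradient f (z t)) (D*(L*D+ε₀+K))
      (by positivity) (hMbound t htT)
    have hBt : (1/((t:ℝ)+2)) * ⟪gradient f (z t), x (t+1) - y (t+1)⟫
        ≤ (η*(D*(L*D+ε₀+K))) * (SSum (t+1)/(((t:ℝ)+1)*((t:ℝ)+2))) := by
      refine le_trans (mul_le_mul_of_nonneg_left hB
        (by positivity : (0:ℝ) ≤ 1/((t:ℝ)+2))) (le_of_eq ?_)
      rw [div_eq_mul_inv, div_eq_mul_inv, div_eq_mul_inv, mul_inv]
      ring
    have hquad : L/2 * ‖z (t+1) - z t‖^2 ≤ (25/32)*L*η^2*D^2 := by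
      have h := hzdist t
      have h2 : ‖z (t+1) - z t‖^2 ≤ ((5/4)*η*D)^2 :=
        pow_le_pow_left₀ (norm_nonneg _) h 2
      have h3 := mul_le_mul_of_nonneg_left h2 (by positivity : (0:ℝ) ≤ L/2)
      nlinarith [h3]
    have hgw : η * ⟪gradient f (z t), w t - z t⟫
        ≤ η * (2*D*(ε₀ + K*((t:ℝ)+1)^(-(1/3:ℝ))) - fwGap f X (z t)) := by
      apply mul_le_mul_of_nonneg_left ?_ hη0.le
      have h := hgapub t htT
      have e : ⟪z t - w t, gradient f (z t)⟫ = - ⟪gradient f (z t), w t - z t⟫ := by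
        rw [real_inner_comm, ← inner_neg_right, neg_sub]
      rw [e] at h
      linarith
    nlinarith [hdesc, hip, hBt, hquad, hgw]
  -- sum the descent steps
  have h1 : ∑ t ∈ Finset.range T, (f (z t) - f (z (t+1))) = f (z 0) - f (z T) :=
    Finset.sum_range_sub' (fun i => f (z i)) T
  have h2 : ∑ t ∈ Finset.range T, (ε₀ + K*((t:ℝ)+1)^(-(1/3:ℝ)))
      ≤ (T:ℝ)*ε₀ + K*((3/2)*(T:ℝ)^((2:ℝ)/3)) := by
    rw [Finset.sum_add_distrib, Finset.sum_const, Finset.card_range, nsmul_eq_mul,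
      ← Finset.mul_sum]
    have := mul_le_mul_of_nonneg_left (sum_rpow_bound T) hK
    linarith
  have h3 : ∑ t ∈ Finset.range T, (SSum (t+1)/(((t:ℝ)+1)*((t:ℝ)+2)))
      = 1 - (1 + SSum T)/((T:ℝ)+1) := Fsum_eq T
  have hsumstep : η * ∑ t ∈ Finset.range T, fwGap f X (z t)
      ≤ (f (z 0) - f (z T)) + (2*D*η)*((T:ℝ)*ε₀ + K*((3/2)*(T:ℝ)^((2:ℝ)/3)))
        + (η*(D*(L*D+ε₀+K))) * (1 - (1 + SSum T)/((T:ℝ)+1))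
        + (T:ℝ)*((25/32)*L*η^2*D^2) := by
    rw [Finset.mul_sum]
    calc ∑ t ∈ Finset.range T, η * fwGap f X (z t)
        ≤ ∑ t ∈ Finset.range T, ((f (z t) - f (z (t+1)))
            + (2*D*η) * (ε₀ + K*((t:ℝ)+1)^(-(1/3:ℝ)))
            + (η*(D*(L*D+ε₀+K))) * (SSum (t+1)/(((t:ℝ)+1)*((t:ℝ)+2)))
            + (25/32)*L*η^2*D^2) :=
          Finset.sum_le_sum fun t ht => hstep t (Finset.mem_range.1 ht)
      _ = (f (z 0) - f (z T))
            + (2*D*η) * (∑ t ∈ Finset.range T, (ε₀ + K*((t:ℝ)+1)^(-(1/3:ℝ))))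
            + (η*(D*(L*D+ε₀+K))) * (∑ t ∈ Finset.range T, (SSum (t+1)/(((t:ℝ)+1)*((t:ℝ)+2))))
            + (T:ℝ)*((25/32)*L*η^2*D^2) := by
          rw [Finset.sum_add_distrib, Finset.sum_add_distrib, Finset.sum_add_distrib,
            h1, Finset.sum_const, Finset.card_range, nsmul_eq_mul,
            ← Finset.mul_sum, ← Finset.mul_sum]
      _ ≤ _ := by
          rw [h3]
          have hc : (0:ℝ) ≤ 2*D*η := by positivity
          have := mul_le_mul_of_nonneg_left h2 hc
          linarith
  have hsum2 : η * ∑ t ∈ Finset.Ico 1 T, fwGap f X (z t)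
      ≤ η * ∑ t ∈ Finset.range T, fwGap f X (z t) := by
    apply mul_le_mul_of_nonneg_left ?_ hη0.le
    rw [Finset.range_eq_Ico]
    apply Finset.sum_le_sum_of_subset_of_nonneg
      (Finset.Ico_subset_Ico (by norm_num) le_rfl)
    intro i _ _
    exact hgap0 i
  have hfzT : sInf (f '' X) ≤ f (z T) :=
    csInf_le (hXcomp.image hdiff.continuous).bddBelow ⟨z T, (hmem T).2.2, rfl⟩
  -- log bounds
  set lg := Real.log (T:ℝ) with hlgdef
  have hlg0 : (0:ℝ) ≤ lg := Real.log_nonneg (by linarith)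
  have hF0 : 0 ≤ 1 - (1 + SSum T)/((T:ℝ)+1) := by
    rw [← h3]
    apply Finset.sum_nonneg
    intro t _
    have := SSum_nonneg (t+1)
    positivity
  have hF1 : 1 - (1 + SSum T)/((T:ℝ)+1) ≤ 1 := by
    have h := SSum_nonneg T
    have : 0 ≤ (1 + SSum T)/((T:ℝ)+1) := div_nonneg (by linarith) (by positivity)
    linarith
  have hFlog : 1 - (1 + SSum T)/((T:ℝ)+1) ≤ lg := by
    rcases eq_or_lt_of_le hT with hT2 | hT3
    · have hTe : T = 2 := hT2.symm
      subst hTe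
      have hSS2 : SSum 2 = 5/6 := by
        simp [SSum, Finset.sum_range_succ]
        norm_num
      rw [hSS2]
      have := Real.log_two_gt_d9
      rw [hlgdef]
      norm_num
      linarith
    · have h31 : (3:ℝ) ≤ (T:ℝ) := by exact_mod_cast hT3
      have hl1 : (1:ℝ) ≤ lg := by
        rw [hlgdef, Real.le_log_iff_exp_le hτ0]
        calc Real.exp 1 ≤ 2.7182818286 := Real.exp_one_lt_d9.le
          _ ≤ (T:ℝ) := by linarith
      have h0 : 0 ≤ (1 + SSum T)/((T:ℝ)+1) :=
        div_nonneg (by linarith [SSum_nonneg T]) (by positivity)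
      linarith
  have hMF : (η*(D*(L*D+ε₀+K))) * (1 - (1 + SSum T)/((T:ℝ)+1))
      ≤ η*(L*D^2) + (η*(D*(ε₀+K)))*lg := by
    have hnn1 : (0:ℝ) ≤ η*(L*D^2) := by positivity
    have hnn2 : (0:ℝ) ≤ η*(D*(ε₀+K)) :=
      mul_nonneg hη0.le (mul_nonneg hD.le (by linarith))
    have e : (η*(D*(L*D+ε₀+K))) * (1 - (1 + SSum T)/((T:ℝ)+1))
        = (η*(L*D^2)) * (1 - (1 + SSum T)/((T:ℝ)+1))
          + (η*(D*(ε₀+K))) * (1 - (1 + SSum T)/((T:ℝ)+1)) := by ring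
    rw [e]
    have ha : (η*(L*D^2)) * (1 - (1 + SSum T)/((T:ℝ)+1)) ≤ (η*(L*D^2)) * 1 :=
      mul_le_mul_of_nonneg_left hF1 hnn1
    have hb : (η*(D*(ε₀+K))) * (1 - (1 + SSum T)/((T:ℝ)+1)) ≤ (η*(D*(ε₀+K))) * lg :=
      mul_le_mul_of_nonneg_left hFlog hnn2
    linarith
  have hkey : η * ∑ t ∈ Finset.Ico 1 T, fwGap f X (z t)
      ≤ (f (z 0) - sInf (f '' X)) + (2*D*η)*((T:ℝ)*ε₀ + K*((3/2)*Q))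
        + η*(L*D^2) + (η*(D*(ε₀+K)))*lg + (T:ℝ)*((25/32)*L*η^2*D^2) := by
    have := le_trans hsum2 hsumstep
    rw [hQdef]
    linarith [hMF, hfzT]
  -- final arithmetic
  have hP' : P ≠ 0 := ne_of_gt hP0
  have hQ' : Q ≠ 0 := ne_of_gt hQ0
  have hηeq : η = 1/Q := by
    rw [eq_div_iff hQ']
    exact hηQ
  have hτeq : (T:ℝ) = P*Q := hPQ.symm
  set A := f (z 0) - sInf (f '' X) with hAdef
  have hRt : A + (2*D*η)*((T:ℝ)*ε₀ + K*((3/2)*Q))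
        + η*(L*D^2) + (η*(D*(ε₀+K)))*lg + (T:ℝ)*((25/32)*L*η^2*D^2)
      ≤ η * ((T:ℝ) * (A/P + 4*L*D^2/Q + 2*D*ε₀ + 3*D*K/P + D*(ε₀+K)*lg/(T:ℝ))) := by
    rw [hηeq, hτeq]
    have hdd : L*D^2/Q + (25/32)*L*D^2*P/Q ≤ 4*L*D^2*P/Q := by
      have h0 : L*D^2 + (25/32)*L*D^2*P ≤ 4*L*D^2*P := by
        nlinarith [mul_pos hL (pow_pos hD 2), hP1]
      have h2 : (L*D^2 + (25/32)*L*D^2*P)/Q ≤ (4*L*D^2*P)/Q := by gcongr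
      have e1 : (L*D^2 + (25/32)*L*D^2*P)/Q = L*D^2/Q + (25/32)*L*D^2*P/Q := by ring
      rw [e1] at h2
      exact h2
    calc A + (2*D*(1/Q))*((P*Q)*ε₀ + K*((3/2)*Q))
          + (1/Q)*(L*D^2) + ((1/Q)*(D*(ε₀+K)))*lg + (P*Q)*((25/32)*L*(1/Q)^2*D^2)
        = A + 2*D*ε₀*P + 3*D*K + L*D^2/Q + D*(ε₀+K)*lg/Q + (25/32)*L*D^2*P/Q := by
          field_simp
          ring
      _ ≤ A + 2*D*ε₀*P + 3*D*K + 4*L*D^2*P/Q + D*(ε₀+K)*lg/Q := by linarith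
      _ = (1/Q) * ((P*Q) * (A/P + 4*L*D^2/Q + 2*D*ε₀ + 3*D*K/P + D*(ε₀+K)*lg/(P*Q))) := by
          field_simp
          ring
  have hS : ∑ t ∈ Finset.Ico 1 T, fwGap f X (z t)
      ≤ (T:ℝ) * (A/P + 4*L*D^2/Q + 2*D*ε₀ + 3*D*K/P + D*(ε₀+K)*lg/(T:ℝ)) := by
    have h := le_trans hkey hRt
    exact le_of_mul_le_mul_left h hη0
  have hfin := mul_le_mul_of_nonneg_left hS
    (by positivity : (0:ℝ) ≤ 1/(T:ℝ))
  have heq : (1/(T:ℝ)) * ((T:ℝ) * (A/P + 4*L*D^2/Q + 2*D*ε₀ + 3*D*K/P + D*(ε₀+K)*lg/(T:ℝ)))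
      = A/P + 4*L*D^2/Q + 2*D*ε₀ + 3*D*K/P + D*(ε₀+K)*lg/(T:ℝ) := by
    field_simp
  rw [heq] at hfin
  exact hfin
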